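/- Let n > 1 and λ2, λ3, k > 0 with λ2 * (n-1)^((n-1)/n) = n * k * λ3. Then f(x) = λ2 * x^n/(λ3^n + x^n) - k x has exactly two nonnegative zeros: 0 and the double root x* = λ3 * (n-1)^(1/n), and f(x) ≤ 0 for all x ≥ 0. -/

import Mathlib

open Real

theorem stmt_4 (n lam2 lam3 k : ℝ) (hn : 1 < n) (h2 : 0 < lam2) (h3 : 0 < lam3)
    (hk : 0 < k)
    (f : ℝ → ℝ) (hf : ∀ x, f x = lam2 * x ^ n / (lam3 ^ n + x ^ n) - k * x)
    (hcond : lam2 * (n - 1) ^ ((n - 1) / n) = n * k * lam3) :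
    f 0 = 0 ∧ f (lam3 * (n - 1) ^ (1 / n)) = 0 ∧
      deriv f (lam3 * (n - 1) ^ (1 / n)) = 0 ∧
      (∀ x, 0 ≤ x → f x = 0 → x = 0 ∨ x = lam3 * (n - 1) ^ (1 / n)) ∧
      ∀ x, 0 ≤ x → f x ≤ 0 := by
  have hn0 : (0:ℝ) < n := by linarith
  have hn1 : (0:ℝ) < n - 1 := by linarith
  set c : ℝ := (n - 1) ^ (1 / n) with hc_def
  have hc : 0 < c := Real.rpow_pos_of_pos hn1 _
  set xs : ℝ := lam3 * c with hxs_def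
  have hxs : 0 < xs := mul_pos h3 hc
  have hA : (0:ℝ) < lam3 ^ n := Real.rpow_pos_of_pos h3 _
  -- basic power identities
  have hcn : c ^ n = n - 1 := by
    rw [hc_def, ← Real.rpow_mul hn1.le, one_div, inv_mul_cancel₀ hn0.ne', Real.rpow_one]
  have hxsn : xs ^ n = lam3 ^ n * (n - 1) := by
    rw [hxs_def, Real.mul_rpow h3.le hc.le, hcn]
  have hD : lam3 ^ n + xs ^ n = n * lam3 ^ n := by rw [hxsn]; ring
  have hDpos : 0 < lam3 ^ n + xs ^ n := by rw [hD]; positivity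
  have hcn1 : c ^ (n - 1) = (n - 1) ^ ((n - 1) / n) := by
    rw [hc_def, ← Real.rpow_mul hn1.le]
    ring_nf
  have hstep : ∀ y : ℝ, 0 < y → y ^ (n - 1) * y = y ^ n := by
    intro y hy
    rw [← Real.rpow_add_one hy.ne' (n - 1), sub_add_cancel]
  have hE2 : lam2 * xs ^ (n - 1) = n * k * lam3 ^ n := by
    have h1 : xs ^ (n - 1) = lam3 ^ (n - 1) * c ^ (n - 1) :=
      Real.mul_rpow h3.le hc.le
    rw [h1, hcn1]
    linear_combination lam3 ^ (n - 1) * hcond + (n * k) * hstep lam3 h3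
  -- key identity : lam2 * (n-1) = n * k * xs
  have hkey : lam2 * (n - 1) = n * k * xs := by
    have := hstep c hc
    rw [hcn1, hcn] at this
    -- c^(n-1) * c = n - 1, i.e. (n-1)^((n-1)/n) * c = n - 1
    rw [hxs_def]
    linear_combination c * hcond - lam2 * this
  -- the auxiliary polynomial H
  set H : ℝ → ℝ := fun x => k * x ^ n - lam2 * x ^ (n - 1) + k * lam3 ^ n with hH_def
  have hHxs : H xs = 0 := by
    simp only [hH_def]
    rw [hxsn]
    linear_combination -hE2
  have hHcont : Continuous H := by
    have c1 : Continuous fun x : ℝ => x ^ n := Real.continuous_rpow_const hn0.le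
    have c2 : Continuous fun x : ℝ => x ^ (n - 1) := Real.continuous_rpow_const hn1.le
    fun_prop
  -- derivative of H away from 0
  have hHderiv : ∀ x : ℝ, x ≠ 0 →
      HasDerivAt H (k * (n * x ^ (n - 1)) - lam2 * ((n - 1) * x ^ (n - 1 - 1))) x := by
    intro x hx
    exact (((Real.hasDerivAt_rpow_const (Or.inl hx)).const_mul k).sub
      ((Real.hasDerivAt_rpow_const (Or.inl hx)).const_mul lam2)).add_const _
  have hderiv_neg : ∀ x ∈ Set.Ioo (0:ℝ) xs, deriv H x < 0 := by
    intro x hx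
    rw [(hHderiv x hx.1.ne').deriv]
    have e : x ^ (n - 1) = x ^ (n - 1 - 1) * x := by
      rw [← Real.rpow_add_one hx.1.ne' (n - 1 - 1), sub_add_cancel]
    have hp : 0 < x ^ (n - 1 - 1) := Real.rpow_pos_of_pos hx.1 _
    rw [e]
    have hlt : n * k * x < n * k * xs := by
      have hnk : 0 < n * k := mul_pos hn0 hk
      exact mul_lt_mul_of_pos_left hx.2 hnk
    have h1 : lam2 * ((n - 1) * x ^ (n - 1 - 1)) = x ^ (n - 1 - 1) * (n * k * xs) := by
      linear_combination x ^ (n - 1 - 1) * hkey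
    rw [h1]
    nlinarith [mul_lt_mul_of_pos_left hlt hp]
  have hderiv_pos : ∀ x ∈ Set.Ioi xs, 0 < deriv H x := by
    intro x hx
    rw [(hHderiv x (lt_trans hxs hx).ne').deriv]
    have e : x ^ (n - 1) = x ^ (n - 1 - 1) * x := by
      rw [← Real.rpow_add_one (lt_trans hxs hx).ne' (n - 1 - 1), sub_add_cancel]
    have hp : 0 < x ^ (n - 1 - 1) := Real.rpow_pos_of_pos (lt_trans hxs hx) _
    rw [e]
    have hlt : n * k * xs < n * k * x := by
      have hnk : 0 < n * k := mul_pos hn0 hk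
      exact mul_lt_mul_of_pos_left hx.out hnk
    have h1 : lam2 * ((n - 1) * x ^ (n - 1 - 1)) = x ^ (n - 1 - 1) * (n * k * xs) := by
      linear_combination x ^ (n - 1 - 1) * hkey
    rw [h1]
    nlinarith [mul_lt_mul_of_pos_left hlt hp]
  have hanti : StrictAntiOn H (Set.Icc 0 xs) := by
    apply strictAntiOn_of_deriv_neg (convex_Icc 0 xs) hHcont.continuousOn
    rwa [interior_Icc]
  have hmono : StrictMonoOn H (Set.Ici xs) := by
    apply strictMonoOn_of_deriv_pos (convex_Ici xs) hHcont.continuousOn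
    rwa [interior_Ici]
  -- H is positive away from xs
  have hHpos : ∀ x : ℝ, 0 ≤ x → x ≠ xs → 0 < H x := by
    intro x hx0 hxne
    rcases lt_or_gt_of_ne hxne with hlt | hgt
    · have := hanti ⟨hx0, hlt.le⟩ ⟨hxs.le, le_refl xs⟩ hlt
      rwa [hHxs] at this
    · have := hmono (Set.self_mem_Ici) (le_of_lt hgt) hgt
      rwa [hHxs] at this
  have hHnonneg : ∀ x : ℝ, 0 ≤ x → 0 ≤ H x := by
    intro x hx0
    rcases eq_or_ne x xs with rfl | hne
    · rw [hHxs]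
    · exact (hHpos x hx0 hne).le
  -- relation between f and H
  have hDx : ∀ x : ℝ, 0 ≤ x → 0 < lam3 ^ n + x ^ n := by
    intro x hx
    have : 0 ≤ x ^ n := Real.rpow_nonneg hx n
    linarith
  have hfH : ∀ x : ℝ, 0 < x → f x = -(x * H x) / (lam3 ^ n + x ^ n) := by
    intro x hx
    rw [hf, hH_def]
    have hDp := hDx x hx.le
    field_simp
    linear_combination (-lam2) * hstep x hx
  -- Part 1 : f 0 = 0
  have part1 : f 0 = 0 := by
    rw [hf]
    rw [Real.zero_rpow hn0.ne']
    simp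
  -- Part 2 : f xs = 0
  have part2 : f xs = 0 := by
    rw [hfH xs hxs, hHxs]
    simp
  -- Part 3 : deriv f xs = 0
  have part3 : deriv f xs = 0 := by
    have hnum : HasDerivAt (fun x : ℝ => lam2 * x ^ n) (lam2 * (n * xs ^ (n - 1))) xs :=
      (Real.hasDerivAt_rpow_const (Or.inl hxs.ne')).const_mul lam2
    have hden : HasDerivAt (fun x : ℝ => lam3 ^ n + x ^ n) (n * xs ^ (n - 1)) xs := by
      simpa using ((Real.hasDerivAt_rpow_const (p := n) (Or.inl hxs.ne')).const_add (lam3 ^ n))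
    have hlin : HasDerivAt (fun x : ℝ => k * x) k xs := by
      simpa using (hasDerivAt_id xs).const_mul k
    have hdiv := (hnum.div hden hDpos.ne').sub hlin
    have hfeq : f = fun x => lam2 * x ^ n / (lam3 ^ n + x ^ n) - k * x := funext hf
    rw [hfeq, (show HasDerivAt (fun x => lam2 * x ^ n / (lam3 ^ n + x ^ n) - k * x) _ xs from hdiv).deriv]
    rw [hD, hxsn]
    have hB : 0 < xs ^ (n - 1) := Real.rpow_pos_of_pos hxs _
    have hnA : (0:ℝ) < n * lam3 ^ n := by positivity
    field_simp
    linear_combination hE2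
  refine ⟨part1, part2, part3, ?_, ?_⟩
  · -- zeros
    intro x hx0 hfx
    rcases eq_or_lt_of_le hx0 with rfl | hxpos
    · exact Or.inl rfl
    right
    by_contra hne
    have h1 := hfH x hxpos
    rw [hfx] at h1
    have hDp := hDx x hx0
    have : x * H x = 0 := by
      field_simp at h1
      linarith [h1]
    have hHx := hHpos x hx0 hne
    nlinarith
  · -- nonpositivity
    intro x hx0
    rcases eq_or_lt_of_le hx0 with rfl | hxpos
    · rw [part1]
    · rw [hfH x hxpos]
      have hDp := hDx x hx0
      have hHx := hHnonneg x hx0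
      have : 0 ≤ x * H x := mul_nonneg hx0 hHx
      apply div_nonpos_of_nonpos_of_nonneg <;> linarith
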